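/- Fix pairwise distinct complex numbers u_1, …, u_n and define H_k : (M_m(ℂ))^n → ℂ by H_k(A_1,…,A_n) := ∑_{l≠k} tr(A_k A_l)/(u_k−u_l). Define matrices G_{k,p} := A_k/(u_k−u_p) for p ≠ k and G_{k,k} := ∑_{l≠k} A_l/(u_k−u_l). Then: (a) H_k is differentiable and its matrix gradient with respect to A_p is G_{k,p}, i.e. for every m×m matrix X, (d/dε) H_k(A_1,…,A_p+εX,…,A_n)|_{ε=0} = tr(X · G_{k,p}); (b) the Lie–Poisson Hamilton equations ∂A_p/∂u_k = [G_{k,p}, A_p] coincide with the Schlesinger equations, namely [G_{k,p}, A_p] = [A_p, A_k]/(u_p−u_k) for p ≠ k, and [G_{k,k}, A_k] = −∑_{j≠k} [A_k, A_j]/(u_k−u_j). -/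

import Mathlib

open Matrix

attribute [local instance] Matrix.normedAddCommGroup Matrix.normedSpace

/-- The Schlesinger equations as time-dependent Hamiltonian systems:
the Hamiltonian `H_k` is differentiable with matrix gradient `G_{k,p}` with respect to `A_p`,
and the Lie–Poisson Hamilton equations `∂A_p/∂u_k = [G_{k,p}, A_p]` coincide with the
Schlesinger equations. -/
theorem stmt_1 (n m : ℕ)
    (u : Fin n → ℂ) (hu : Function.Injective u)
    (A : Fin n → Matrix (Fin m) (Fin m) ℂ)
    (k : Fin n)
    (Hfun : (Fin n → Matrix (Fin m) (Fin m) ℂ) → ℂ)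
    (hH : ∀ B, Hfun B = ∑ l ∈ Finset.univ.erase k, trace (B k * B l) / (u k - u l))
    (G : Fin n → Matrix (Fin m) (Fin m) ℂ)
    (hGoff : ∀ p, p ≠ k → G p = (u k - u p)⁻¹ • A k)
    (hGk : G k = ∑ l ∈ Finset.univ.erase k, (u k - u l)⁻¹ • A l) :
    Differentiable ℂ Hfun ∧
    (∀ (p : Fin n) (X : Matrix (Fin m) (Fin m) ℂ),
      HasDerivAt (fun ε : ℂ => Hfun (Function.update A p (A p + ε • X)))
        (trace (X * G p)) 0) ∧
    (∀ p, p ≠ k →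
      G p * A p - A p * G p = (u p - u k)⁻¹ • (A p * A k - A k * A p)) ∧
    (G k * A k - A k * G k
      = -∑ j ∈ Finset.univ.erase k, (u k - u j)⁻¹ • (A k * A j - A j * A k)) := by
  have hent : ∀ (p : Fin n) (i j : Fin m),
      Differentiable ℂ (fun B : (Fin n → Matrix (Fin m) (Fin m) ℂ) => B p i j) := by
    intro p i j
    exact ((differentiable_apply (F' := fun _ : Fin m => ℂ) j).comp
      ((differentiable_apply (F' := fun _ : Fin m => (Fin m → ℂ)) i).comp
        (differentiable_apply (𝕜 := ℂ) (F' := fun _ : Fin n => Matrix (Fin m) (Fin m) ℂ) p)))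
  have hdiff : Differentiable ℂ Hfun := by
    have hrw : Hfun = fun B => ∑ l ∈ Finset.univ.erase k,
        (∑ i, ∑ j, B k i j * B l j i) * (u k - u l)⁻¹ := by
      funext B
      rw [hH]
      refine Finset.sum_congr rfl fun l _ => ?_
      simp [div_eq_mul_inv, Matrix.trace, Matrix.diag, Matrix.mul_apply]
    rw [hrw]
    refine Differentiable.fun_sum fun l _ => ?_
    refine Differentiable.mul_const ?_ _
    refine Differentiable.fun_sum fun i _ => ?_
    refine Differentiable.fun_sum fun j _ => ?_
    exact (hent k i j).mul (hent l j i)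
  have hval : ∀ (p : Fin n) (X : Matrix (Fin m) (Fin m) ℂ) (ε : ℂ),
      Hfun (Function.update A p (A p + ε • X)) = Hfun A + ε * trace (X * G p) := by
    intro p X ε
    by_cases hp : p = k
    · subst hp
      rw [hH, hH]
      have hTG : trace (X * G p) = ∑ l ∈ Finset.univ.erase p,
          (u p - u l)⁻¹ * trace (X * A l) := by
        rw [hGk, Matrix.mul_sum, trace_sum]
        refine Finset.sum_congr rfl fun l _ => ?_
        rw [mul_smul_comm, trace_smul, smul_eq_mul]
      rw [hTG, Finset.mul_sum, ← Finset.sum_add_distrib]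
      refine Finset.sum_congr rfl fun l hl => ?_
      have hlp : l ≠ p := Finset.ne_of_mem_erase hl
      rw [Function.update_self, Function.update_of_ne hlp, add_mul, smul_mul_assoc,
        trace_add, trace_smul, smul_eq_mul, add_div, trace_mul_comm X (A l)]
      ring
    · rw [hH, hH, hGoff p hp]
      have hpk : p ∈ Finset.univ.erase k := Finset.mem_erase.2 ⟨hp, Finset.mem_univ p⟩
      have hstep : ∀ l ∈ Finset.univ.erase k,
          trace (Function.update A p (A p + ε • X) k * Function.update A p (A p + ε • X) l)
            / (u k - u l)
          = trace (A k * A l) / (u k - u l)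
            + (if l = p then ε * trace (X * ((u k - u p)⁻¹ • A k)) else 0) := by
        intro l hl
        rw [Function.update_of_ne (Ne.symm hp)]
        by_cases hlp : l = p
        · subst hlp
          rw [Function.update_self, if_pos rfl, Matrix.mul_add, trace_add, mul_smul_comm,
            trace_smul, smul_eq_mul, add_div, mul_smul_comm, trace_smul, smul_eq_mul,
            trace_mul_comm (A k) X]
          ring
        · rw [Function.update_of_ne hlp, if_neg hlp]
          simp
      rw [Finset.sum_congr rfl hstep, Finset.sum_add_distrib, Finset.sum_ite_eq' _ p _,
        if_pos hpk]
  refine ⟨hdiff, ?_, ?_, ?_⟩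
  · intro p X
    have heq : (fun ε : ℂ => Hfun (Function.update A p (A p + ε • X)))
        = fun ε : ℂ => Hfun A + ε * trace (X * G p) := funext (hval p X)
    rw [heq]
    simpa using ((hasDerivAt_id (0 : ℂ)).mul_const (trace (X * G p))).const_add (Hfun A)
  · intro p hp
    rw [hGoff p hp, smul_mul_assoc, mul_smul_comm, ← smul_sub,
      show u p - u k = -(u k - u p) from by ring, inv_neg, neg_smul, ← smul_neg, neg_sub]
  · rw [hGk, Finset.sum_mul, Matrix.mul_sum, ← Finset.sum_sub_distrib, ← Finset.sum_neg_distrib]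
    refine Finset.sum_congr rfl fun j _ => ?_
    rw [smul_mul_assoc, mul_smul_comm, ← smul_sub, ← smul_neg, neg_sub]
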